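/- Let a₁ < a₂ < ⋯ < a_k be natural numbers and let x : ℕ → ℕ be an infinite word with values in {a₁, …, a_k} that is C-balanced for some C ≥ 1. Then the additive complexity of x satisfies ρ⁺_x(n) ≤ C · ∑_{i=1}^{⌈k/2⌉} (a_{k+1−i} − a_i) + 1 for all n ≥ 0. -/

import Mathlib

/-- Sum of the letters of the length-`n` factor of `x` starting at position `i`. -/
def blockSum (x : ℕ → ℕ) (i n : ℕ) : ℕ := ∑ j ∈ Finset.range n, x (i + j)

/-- Additive complexity: the number of distinct letter-sums of length-`n` factors. -/
noncomputable def addComplexity (x : ℕ → ℕ) (n : ℕ) : ℕ :=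
  Set.ncard {s : ℕ | ∃ i : ℕ, blockSum x i n = s}

/-- Parikh vector of the length-`n` factor of `x` starting at position `i`. -/
def parikh (x : ℕ → ℕ) (i n : ℕ) : ℕ → ℕ :=
  fun a => ((Finset.range n).filter fun j => x (i + j) = a).card

/-- Abelian complexity: the number of distinct Parikh vectors of length-`n` factors. -/
noncomputable def abComplexity (x : ℕ → ℕ) (n : ℕ) : ℕ :=
  Set.ncard {P : ℕ → ℕ | ∃ i : ℕ, parikh x i n = P}

/-- `x` is the fixed point of the morphism `f` starting with the letter `a₀`:
`x 0 = a₀` and `x` is the infinite concatenation `f (x 0) f (x 1) f (x 2) ⋯`. -/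
def IsFixedPointOf (f : ℕ → List ℕ) (a₀ : ℕ) (x : ℕ → ℕ) : Prop :=
  x 0 = a₀ ∧ ∀ n j, j < (f (x n)).length →
    x ((∑ k ∈ Finset.range n, (f (x k)).length) + j) = (f (x n)).getD j 0

/-- An infinite word is C-balanced if the numbers of occurrences of any letter in any
two factors of the same length differ by at most C. -/
def CBalanced (x : ℕ → ℕ) (C : ℕ) : Prop :=
  ∀ a i i' n : ℕ, ((parikh x i n a : ℤ) - (parikh x i' n a : ℤ)).natAbs ≤ C

/-- A C-balanced word over a₁ < ⋯ < a_k has additive complexity bounded by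
C·∑_{i=1}^{⌈k/2⌉} (a_{k+1−i} − a_i) + 1. -/
theorem balanced_additive_complexity_bound (k C : ℕ) (hC : 1 ≤ C)
    (a : ℕ → ℕ) (hmono : ∀ i j, 1 ≤ i → i < j → j ≤ k → a i < a j)
    (x : ℕ → ℕ) (hvals : ∀ n : ℕ, ∃ i, 1 ≤ i ∧ i ≤ k ∧ x n = a i)
    (hbal : CBalanced x C) :
    ∀ n : ℕ, addComplexity x n ≤
      C * (∑ i ∈ Finset.Icc 1 ((k + 1) / 2), (a (k + 1 - i) - a i)) + 1 := by
  intro n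
  classical
  obtain ⟨i0, hi01, hi0k, _⟩ := hvals 0
  have hk : 1 ≤ k := le_trans hi01 hi0k
  set m : ℕ := (k + 1) / 2 with hm
  have hm1 : 1 ≤ m := by omega
  have hmk : m ≤ k := by omega
  have amono : ∀ s t, 1 ≤ s → s ≤ t → t ≤ k → a s ≤ a t := by
    intro s t h1 h2 h3
    rcases eq_or_lt_of_le h2 with h | h
    · exact le_of_eq (congrArg a h)
    · exact (hmono s t h1 h h3).le
  have ainj : ∀ s t, 1 ≤ s → s ≤ k → 1 ≤ t → t ≤ k → a s = a t → s = t := by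
    intro s t hs1 hs2 ht1 ht2 h
    rcases lt_trichotomy s t with hlt | he | hgt
    · exact absurd h (hmono s t hs1 hlt ht2).ne
    · exact he
    · exact absurd h.symm (hmono t s ht1 hgt hs2).ne
  choose idx hidx1 hidx2 hidxv using hvals
  have hfilter : ∀ i nn t, 1 ≤ t → t ≤ k →
      ((Finset.range nn).filter fun j => idx (i + j) = t)
        = ((Finset.range nn).filter fun j => x (i + j) = a t) := by
    intro i nn t ht1 ht2
    apply Finset.filter_congr
    intro j _
    constructor
    · intro h; rw [hidxv (i + j), h]
    · intro h
      exact ainj _ _ (hidx1 (i + j)) (hidx2 (i + j)) ht1 ht2 ((hidxv (i + j)).symm.trans h)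
  have hmaps : ∀ i nn : ℕ, ∀ j ∈ Finset.range nn, idx (i + j) ∈ Finset.Icc 1 k := by
    intro i nn j _
    exact Finset.mem_Icc.mpr ⟨hidx1 _, hidx2 _⟩
  have hpar : ∀ i nn, ∑ t ∈ Finset.Icc 1 k, parikh x i nn (a t) = nn := by
    intro i nn
    have h := Finset.sum_fiberwise_of_maps_to (hmaps i nn) (fun _ => (1 : ℕ))
    refine Eq.trans ?_ (h.trans ?_)
    · apply Finset.sum_congr rfl
      intro t ht
      rw [Finset.mem_Icc] at ht
      simp only [parikh]
      rw [Finset.sum_const, smul_eq_mul, mul_one, hfilter i nn t ht.1 ht.2]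
    · rw [Finset.sum_const, smul_eq_mul, mul_one, Finset.card_range]
  have hblock : ∀ i nn, ∑ t ∈ Finset.Icc 1 k, parikh x i nn (a t) * a t
      = blockSum x i nn := by
    intro i nn
    have h := Finset.sum_fiberwise_of_maps_to (hmaps i nn) (fun j => x (i + j))
    rw [blockSum]
    refine Eq.trans ?_ h
    apply Finset.sum_congr rfl
    intro t ht
    rw [Finset.mem_Icc] at ht
    have hval : ∀ j ∈ (Finset.range nn).filter (fun j => idx (i + j) = t),
        x (i + j) = a t := by
      intro j hj
      rw [Finset.mem_filter] at hj
      rw [hidxv (i + j), hj.2]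
    rw [Finset.sum_congr rfl hval, Finset.sum_const, smul_eq_mul]
    simp only [parikh]
    rw [hfilter i nn t ht.1 ht.2]
  -- the key sum inequality about the letters
  have habs : ∑ t ∈ Finset.Icc 1 k, |((a t : ℤ)) - (a m : ℤ)| ≤
      ∑ t ∈ Finset.Icc 1 m, ((a (k + 1 - t) : ℤ) - (a t : ℤ)) := by
    have hdisj : Disjoint (Finset.Icc 1 m) (Finset.Ioc m k) := by
      rw [Finset.disjoint_left]
      intro t h1 h2
      rw [Finset.mem_Icc] at h1
      rw [Finset.mem_Ioc] at h2
      omega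
    have hsplit : Finset.Icc 1 k = Finset.Icc 1 m ∪ Finset.Ioc m k := by
      ext t
      simp only [Finset.mem_Icc, Finset.mem_union, Finset.mem_Ioc]
      omega
    rw [hsplit, Finset.sum_union hdisj]
    have hlow : ∑ t ∈ Finset.Icc 1 m, |((a t : ℤ)) - (a m : ℤ)|
        = ∑ t ∈ Finset.Icc 1 m, ((a m : ℤ) - (a t : ℤ)) := by
      apply Finset.sum_congr rfl
      intro t ht
      rw [Finset.mem_Icc] at ht
      rw [abs_sub_comm, abs_of_nonneg]
      simp only [sub_nonneg, Nat.cast_le]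
      exact amono t m ht.1 ht.2 hmk
    have hupp : ∑ t ∈ Finset.Ioc m k, |((a t : ℤ)) - (a m : ℤ)| ≤
        ∑ t ∈ Finset.Icc 1 m, ((a (k + 1 - t) : ℤ) - (a m : ℤ)) := by
      have h1 : ∑ t ∈ Finset.Ioc m k, |((a t : ℤ)) - (a m : ℤ)|
          = ∑ t ∈ Finset.Ioc m k, ((a t : ℤ) - (a m : ℤ)) := by
        apply Finset.sum_congr rfl
        intro t ht
        rw [Finset.mem_Ioc] at ht
        rw [abs_of_nonneg]
        simp only [sub_nonneg, Nat.cast_le]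
        exact amono m t hm1 ht.1.le ht.2
      have hinj : ∀ s ∈ Finset.Ioc m k, ∀ t ∈ Finset.Ioc m k,
          k + 1 - s = k + 1 - t → s = t := by
        intro s hs t ht h
        rw [Finset.mem_Ioc] at hs ht
        omega
      have himg : ∑ i ∈ (Finset.Ioc m k).image (fun t => k + 1 - t),
          ((a (k + 1 - i) : ℤ) - (a m : ℤ))
          = ∑ t ∈ Finset.Ioc m k, ((a t : ℤ) - (a m : ℤ)) := by
        rw [Finset.sum_image hinj]
        apply Finset.sum_congr rfl
        intro t ht
        rw [Finset.mem_Ioc] at ht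
        have : k + 1 - (k + 1 - t) = t := by omega
        rw [this]
      rw [h1, ← himg]
      apply Finset.sum_le_sum_of_subset_of_nonneg
      · intro i hi
        rw [Finset.mem_image] at hi
        obtain ⟨t, ht, rfl⟩ := hi
        rw [Finset.mem_Ioc] at ht
        rw [Finset.mem_Icc]
        omega
      · intro i hi _
        rw [Finset.mem_Icc] at hi
        simp only [sub_nonneg, Nat.cast_le]
        exact amono m (k + 1 - i) hm1 (by omega) (by omega)
    rw [hlow]
    calc (∑ t ∈ Finset.Icc 1 m, ((a m : ℤ) - (a t : ℤ)))
          + ∑ t ∈ Finset.Ioc m k, |((a t : ℤ)) - (a m : ℤ)|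
        ≤ (∑ t ∈ Finset.Icc 1 m, ((a m : ℤ) - (a t : ℤ)))
          + ∑ t ∈ Finset.Icc 1 m, ((a (k + 1 - t) : ℤ) - (a m : ℤ)) :=
          add_le_add_right hupp _
      _ = ∑ t ∈ Finset.Icc 1 m, ((a (k + 1 - t) : ℤ) - (a t : ℤ)) := by
          rw [← Finset.sum_add_distrib]
          apply Finset.sum_congr rfl
          intro t _
          ring
  -- the key balance bound on block sums
  have key : ∀ i i' : ℕ, |(blockSum x i n : ℤ) - (blockSum x i' n : ℤ)| ≤
      (C : ℤ) * ∑ t ∈ Finset.Icc 1 m, ((a (k + 1 - t) : ℤ) - (a t : ℤ)) := by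
    intro i i'
    set d : ℕ → ℤ := fun t => (parikh x i n (a t) : ℤ) - (parikh x i' n (a t) : ℤ)
      with hd
    have hdle : ∀ t, |d t| ≤ (C : ℤ) := by
      intro t
      simp only [hd]
      have h := hbal (a t) i i' n
      rw [abs_le]
      omega
    have hd0 : ∑ t ∈ Finset.Icc 1 k, d t = 0 := by
      simp only [hd]
      rw [Finset.sum_sub_distrib, ← Nat.cast_sum, ← Nat.cast_sum, hpar i n,
        hpar i' n, sub_self]
    have e1 : (blockSum x i n : ℤ)
        = ∑ t ∈ Finset.Icc 1 k, (parikh x i n (a t) : ℤ) * (a t : ℤ) := by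
      rw [← hblock i n]
      push_cast
      rfl
    have e2 : (blockSum x i' n : ℤ)
        = ∑ t ∈ Finset.Icc 1 k, (parikh x i' n (a t) : ℤ) * (a t : ℤ) := by
      rw [← hblock i' n]
      push_cast
      rfl
    have hdiff : (blockSum x i n : ℤ) - (blockSum x i' n : ℤ)
        = ∑ t ∈ Finset.Icc 1 k, d t * ((a t : ℤ) - (a m : ℤ)) := by
      rw [e1, e2, ← Finset.sum_sub_distrib]
      have h2 : ∀ t ∈ Finset.Icc 1 k,
          (parikh x i n (a t) : ℤ) * (a t : ℤ) - (parikh x i' n (a t) : ℤ) * (a t : ℤ)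
          = d t * ((a t : ℤ) - (a m : ℤ)) + d t * (a m : ℤ) := by
        intro t _
        simp only [hd]
        ring
      rw [Finset.sum_congr rfl h2, Finset.sum_add_distrib, ← Finset.sum_mul, hd0,
        zero_mul, add_zero]
    calc |(blockSum x i n : ℤ) - (blockSum x i' n : ℤ)|
        = |∑ t ∈ Finset.Icc 1 k, d t * ((a t : ℤ) - (a m : ℤ))| := by rw [hdiff]
      _ ≤ ∑ t ∈ Finset.Icc 1 k, |d t * ((a t : ℤ) - (a m : ℤ))| :=
          Finset.abs_sum_le_sum_abs _ _
      _ ≤ ∑ t ∈ Finset.Icc 1 k, (C : ℤ) * |(a t : ℤ) - (a m : ℤ)| := by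
          apply Finset.sum_le_sum
          intro t _
          rw [abs_mul]
          exact mul_le_mul_of_nonneg_right (hdle t) (abs_nonneg _)
      _ = (C : ℤ) * ∑ t ∈ Finset.Icc 1 k, |(a t : ℤ) - (a m : ℤ)| := by
          rw [Finset.mul_sum]
      _ ≤ (C : ℤ) * ∑ t ∈ Finset.Icc 1 m, ((a (k + 1 - t) : ℤ) - (a t : ℤ)) :=
          mul_le_mul_of_nonneg_left habs (by positivity)
  -- cast the bound to ℕ
  set Bn : ℕ := C * (∑ i ∈ Finset.Icc 1 m, (a (k + 1 - i) - a i)) with hBn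
  have hcast : (Bn : ℤ)
      = (C : ℤ) * ∑ t ∈ Finset.Icc 1 m, ((a (k + 1 - t) : ℤ) - (a t : ℤ)) := by
    rw [hBn, Nat.cast_mul, Nat.cast_sum]
    congr 1
    apply Finset.sum_congr rfl
    intro t ht
    rw [Finset.mem_Icc] at ht
    rw [Nat.cast_sub (amono t (k + 1 - t) ht.1 (by omega) (by omega))]
  have key2 : ∀ i i' : ℕ, blockSum x i n ≤ blockSum x i' n + Bn := by
    intro i i'
    have h := key i i'
    rw [← hcast, abs_sub_le_iff] at h
    have h1 := h.1
    omega
  -- conclude by counting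
  set T : Set ℕ := {s | ∃ i, blockSum x i n = s} with hT
  have hne : T.Nonempty := ⟨blockSum x 0 n, 0, rfl⟩
  have ht0 : sInf T ∈ T := Nat.sInf_mem hne
  obtain ⟨j0, hj0⟩ := ht0
  have hsub : T ⊆ Set.Icc (sInf T) (sInf T + Bn) := by
    rintro s ⟨i, rfl⟩
    refine ⟨Nat.sInf_le ⟨i, rfl⟩, ?_⟩
    calc blockSum x i n ≤ blockSum x j0 n + Bn := key2 i j0
      _ = sInf T + Bn := by rw [hj0]
  have hle : T.ncard ≤ (Set.Icc (sInf T) (sInf T + Bn)).ncard :=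
    Set.ncard_le_ncard hsub (Set.finite_Icc _ _)
  have hicc : (Set.Icc (sInf T) (sInf T + Bn)).ncard = Bn + 1 := by
    rw [← Finset.coe_Icc, Set.ncard_coe_finset, Nat.card_Icc]
    omega
  show T.ncard ≤ Bn + 1
  omega
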